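/- arXiv:1412.5936 — 3 statements merged into one kernel-verified Lean document; each statement's English description precedes it below -/
import Mathlib

section
/- Monotonicity of the Malthus parameter: if B, B̃ are two division rates with b ≤ B(x) ≤ B̃(x) for all x ≥ 0 (b > 0), then the associated Malthus parameters satisfy λ_B ≤ λ_{B̃}. -/
open Real MeasureTheory Set

namespace MalthusAux

/-- primitive of `f` on `(0,x]`, clamped to `[0,t]` so that it is globally continuous. -/
noncomputable def prim (f : ℝ → ℝ) (t x : ℝ) : ℝ := ∫ y in Ioc 0 (max 0 (min x t)), f y

lemma prim_eq (f : ℝ → ℝ) {t x : ℝ} (hx : 0 ≤ x) (hxt : x ≤ t) :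
    prim f t x = ∫ y in Ioc 0 x, f y := by
  unfold prim; rw [min_eq_left hxt, max_eq_right hx]

lemma prim_continuous {f : ℝ → ℝ} {t : ℝ} (ht : 0 ≤ t) (hint : IntegrableOn f (Icc 0 t)) :
    Continuous (prim f t) := by
  have h1 : ContinuousOn (fun x => ∫ y in Ioc 0 x, f y) (Icc 0 t) :=
    intervalIntegral.continuousOn_primitive hint
  have h2 : Continuous (fun x : ℝ => max 0 (min x t)) :=
    continuous_const.max (continuous_id.min continuous_const)
  exact h1.comp_continuous h2 (fun x => ⟨le_max_left _ _, max_le ht (min_le_right _ _)⟩)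

lemma prim_nonneg {f : ℝ → ℝ} {t r : ℝ} (hf : ∀ y, 0 ≤ y → 0 ≤ f y) :
    0 ≤ prim f t r := by
  unfold prim
  exact setIntegral_nonneg measurableSet_Ioc (fun y hy => hf y hy.1.le)

lemma prim_le_prim {f g : ℝ → ℝ} {t : ℝ} (hfint : IntegrableOn f (Icc 0 t))
    (hgint : IntegrableOn g (Icc 0 t)) (hfg : ∀ y, 0 ≤ y → f y ≤ g y)
    {r : ℝ} (hr : r ∈ Icc 0 t) :
    prim f t r ≤ prim g t r := by
  rw [prim_eq f hr.1 hr.2, prim_eq g hr.1 hr.2]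
  have hsub : Ioc (0:ℝ) r ⊆ Icc 0 t := fun y hy => ⟨hy.1.le, hy.2.trans hr.2⟩
  exact setIntegral_mono_on (hfint.mono_set hsub) (hgint.mono_set hsub)
    measurableSet_Ioc (fun y hy => hfg y hy.1.le)

lemma rho_strictMonoOn {f : ℝ → ℝ} {t l : ℝ} (hl : 0 < l)
    (hf : ∀ y, 0 ≤ y → 0 ≤ f y) (hint : IntegrableOn f (Icc 0 t)) :
    StrictMonoOn (fun x => l * x + prim f t x) (Icc 0 t) := by
  intro x hx y hy hxy
  have hP : prim f t x ≤ prim f t y := by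
    rw [prim_eq f hx.1 hx.2, prim_eq f hy.1 hy.2]
    have hsplit : Ioc (0:ℝ) x ∪ Ioc x y = Ioc 0 y := Ioc_union_Ioc_eq_Ioc hx.1 hxy.le
    have hx' : IntegrableOn f (Ioc 0 x) := hint.mono_set (fun z hz => ⟨hz.1.le, hz.2.trans hx.2⟩)
    have hy' : IntegrableOn f (Ioc x y) :=
      hint.mono_set (fun z hz => ⟨hx.1.trans hz.1.le, hz.2.trans hy.2⟩)
    have := setIntegral_union (Ioc_disjoint_Ioc_of_le (a := (0:ℝ)) (b := x) (c := x) (d := y) le_rfl)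
      measurableSet_Ioc hx' hy'
    rw [hsplit] at this
    rw [this]
    have : 0 ≤ ∫ z in Ioc x y, f z :=
      setIntegral_nonneg measurableSet_Ioc (fun z hz => hf z (hx.1.trans hz.1.le))
    linarith
  have hlx : l * x < l * y := mul_lt_mul_of_pos_left hxy hl
  dsimp only
  linarith

lemma lintegral_ofReal_Ioc {f : ℝ → ℝ} {t r : ℝ} (hr : 0 ≤ r) (hrt : r ≤ t)
    (hf : ∀ y, 0 ≤ y → 0 ≤ f y) (hint : IntegrableOn f (Icc 0 t)) :
    ∫⁻ x in Ioc 0 r, ENNReal.ofReal (f x) = ENNReal.ofReal (prim f t r) := by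
  rw [prim_eq f hr hrt, ofReal_integral_eq_lintegral_ofReal
    (hint.mono_set (fun z hz => ⟨hz.1.le, hz.2.trans hrt⟩))
    ((ae_restrict_iff' measurableSet_Ioc).2 (ae_of_all _ (fun y hy => hf y hy.1.le)))]

lemma inner_eq {f : ℝ → ℝ} {t l : ℝ} (hl : 0 < l) (ht : 0 ≤ t)
    (hf : ∀ y, 0 ≤ y → 0 ≤ f y) (hint : IntegrableOn f (Icc 0 t))
    {u : ℝ} (hu : 0 ≤ u) :
    ∃ r ∈ Icc (0:ℝ) t,
      (∫⁻ x in {x | l * x + prim f t x < u} ∩ Ioc 0 t, ENNReal.ofReal (f x))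
        = ENNReal.ofReal (prim f t r)
      ∧ (l * r + prim f t r = u ∨ (r = t ∧ l * t + prim f t t ≤ u)) := by
  set ρ : ℝ → ℝ := fun x => l * x + prim f t x with hρ
  have hρc : Continuous ρ := by
    exact (continuous_const.mul continuous_id).add (prim_continuous ht hint)
  have hsm : StrictMonoOn ρ (Icc 0 t) := rho_strictMonoOn hl hf hint
  have hρ0 : ρ 0 = 0 := by
    simp only [hρ, mul_zero, prim_eq f le_rfl ht, Ioc_self, setIntegral_empty, zero_add]
  by_cases hcase : u ≤ ρ t
  · -- IVT gives r with ρ r = u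
    obtain ⟨r, hrmem, hru⟩ : ∃ r ∈ Icc (0:ℝ) t, ρ r = u := by
      have := intermediate_value_Icc ht hρc.continuousOn (a := (0:ℝ)) (b := t)
      have hu' : u ∈ Icc (ρ 0) (ρ t) := ⟨by rw [hρ0]; exact hu, hcase⟩
      obtain ⟨r, hr, hru⟩ := this hu'
      exact ⟨r, hr, hru⟩
    refine ⟨r, hrmem, ?_, Or.inl hru⟩
    have hset : {x | ρ x < u} ∩ Ioc 0 t = Ioo 0 r := by
      ext x
      constructor
      · rintro ⟨hx1, hx2⟩
        refine ⟨hx2.1, ?_⟩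
        by_contra hcon
        push_neg at hcon
        have : ρ r ≤ ρ x := hsm.monotoneOn hrmem ⟨hx2.1.le, hx2.2⟩ hcon
        rw [hru] at this
        exact absurd hx1 (not_lt.2 this)
      · intro hx
        have hxI : x ∈ Icc (0:ℝ) t := ⟨hx.1.le, hx.2.le.trans hrmem.2⟩
        refine ⟨?_, ⟨hx.1, hxI.2⟩⟩
        have : ρ x < ρ r := hsm hxI hrmem hx.2
        rw [hru] at this; exact this
    rw [hset, setLIntegral_congr Ioo_ae_eq_Ioc]
    exact lintegral_ofReal_Ioc hrmem.1 hrmem.2 hf hint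
  · push_neg at hcase
    refine ⟨t, ⟨ht, le_rfl⟩, ?_, Or.inr ⟨rfl, hcase.le⟩⟩
    have hset : {x | ρ x < u} ∩ Ioc 0 t = Ioc 0 t := by
      apply inter_eq_right.2
      intro x hx
      have : ρ x ≤ ρ t := hsm.monotoneOn ⟨hx.1.le, hx.2⟩ ⟨ht, le_rfl⟩ hx.2
      exact lt_of_le_of_lt this hcase
    rw [hset]
    exact lintegral_ofReal_Ioc ht le_rfl hf hint
lemma lintegral_exp_neg_Ioi (a : ℝ) :
    ∫⁻ u in Ioi a, ENNReal.ofReal (Real.exp (-u)) = ENNReal.ofReal (Real.exp (-a)) := by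
  rw [← ofReal_integral_eq_lintegral_ofReal, integral_exp_neg_Ioi]
  · exact (by simpa using exp_neg_integrableOn_Ioi a one_pos : IntegrableOn (fun x : ℝ => rexp (-x)) (Ioi a))
  · exact ae_of_all _ (fun x => (exp_pos _).le)

/-- layer-cake representation of a single value. -/
lemma layer {c a : ℝ} (hc : 0 ≤ c) (ha : 0 ≤ a) :
    ENNReal.ofReal (a * Real.exp (-c)) =
      ∫⁻ u in Ioi (0:ℝ),
        ENNReal.ofReal a * (Ioi c).indicator (fun v => ENNReal.ofReal (Real.exp (-v))) u := by
  have hm : Measurable (fun v : ℝ => ENNReal.ofReal (Real.exp (-v))) :=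
    (Real.measurable_exp.comp measurable_neg).ennreal_ofReal
  rw [lintegral_const_mul _ (hm.indicator measurableSet_Ioi)]
  rw [lintegral_indicator measurableSet_Ioi]
  rw [Measure.restrict_restrict measurableSet_Ioi, Ioi_inter_Ioi, max_eq_left hc,
    lintegral_exp_neg_Ioi, ← ENNReal.ofReal_mul ha]

/-- Core comparison on a finite interval where `g` (hence `f`) is integrable. -/
lemma core {f g : ℝ → ℝ} {t l : ℝ} (hl : 0 < l) (ht : 0 ≤ t)
    (hfm : Measurable f) (hgm : Measurable g)
    (hf0 : ∀ y, 0 ≤ y → 0 ≤ f y) (hfg : ∀ y, 0 ≤ y → f y ≤ g y)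
    (hgint : IntegrableOn g (Icc 0 t)) :
    ∫⁻ x in Ioc 0 t, ENNReal.ofReal (f x * Real.exp (-(l * x + prim f t x))) ≤
      ∫⁻ x in Ioc 0 t, ENNReal.ofReal (g x * Real.exp (-(l * x + prim g t x))) := by
  have hg0 : ∀ y, 0 ≤ y → 0 ≤ g y := fun y hy => (hf0 y hy).trans (hfg y hy)
  have hfint : IntegrableOn f (Icc 0 t) := by
    refine hgint.mono' hfm.aestronglyMeasurable ?_
    refine (ae_restrict_iff' measurableSet_Icc).2 (ae_of_all _ (fun x hx => ?_))
    rw [Real.norm_eq_abs, abs_of_nonneg (hf0 x hx.1)]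
    exact hfg x hx.1
  set ρf : ℝ → ℝ := fun x => l * x + prim f t x with hρf
  set ρg : ℝ → ℝ := fun x => l * x + prim g t x with hρg
  have hρfc : Continuous ρf := (continuous_const.mul continuous_id).add (prim_continuous ht hfint)
  have hρgc : Continuous ρg := (continuous_const.mul continuous_id).add (prim_continuous ht hgint)
  -- the product-space kernels
  set Gf : ℝ × ℝ → ENNReal := fun q =>
    ENNReal.ofReal (f q.1) *
      ({q : ℝ × ℝ | ρf q.1 < q.2}.indicator (fun q => ENNReal.ofReal (Real.exp (-q.2))) q) with hGf
  set Gg : ℝ × ℝ → ENNReal := fun q =>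
    ENNReal.ofReal (g q.1) *
      ({q : ℝ × ℝ | ρg q.1 < q.2}.indicator (fun q => ENNReal.ofReal (Real.exp (-q.2))) q) with hGg
  have hSf : MeasurableSet {q : ℝ × ℝ | ρf q.1 < q.2} :=
    measurableSet_lt (hρfc.measurable.comp measurable_fst) measurable_snd
  have hSg : MeasurableSet {q : ℝ × ℝ | ρg q.1 < q.2} :=
    measurableSet_lt (hρgc.measurable.comp measurable_fst) measurable_snd
  have hGfm : Measurable Gf := by
    exact ((hfm.comp measurable_fst).ennreal_ofReal).mul
      (((measurable_exp.comp measurable_snd.neg).ennreal_ofReal).indicator hSf)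
  have hGgm : Measurable Gg := by
    exact ((hgm.comp measurable_fst).ennreal_ofReal).mul
      (((measurable_exp.comp measurable_snd.neg).ennreal_ofReal).indicator hSg)
  -- step 1 : layer representation
  have hlayer : ∀ (h : ℝ → ℝ) (ρ : ℝ → ℝ), (∀ y, 0 ≤ y → 0 ≤ h y) →
      (∀ x ∈ Ioc (0:ℝ) t, 0 ≤ ρ x) →
      ∀ x ∈ Ioc (0:ℝ) t,
        ENNReal.ofReal (h x * Real.exp (-(ρ x))) =
        ∫⁻ u in Ioi (0:ℝ), ENNReal.ofReal (h x) *
          ({q : ℝ × ℝ | ρ q.1 < q.2}.indicator (fun q => ENNReal.ofReal (Real.exp (-q.2))) (x, u)) := by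
    intro h ρ h0 hρ0 x hx
    rw [layer (hρ0 x hx) (h0 x hx.1.le)]
    refine lintegral_congr (fun u => ?_)
    simp only [indicator_apply, mem_Ioi, mem_setOf_eq]
  have hρf0 : ∀ x ∈ Ioc (0:ℝ) t, 0 ≤ ρf x := fun x hx =>
    add_nonneg (mul_nonneg hl.le hx.1.le) (prim_nonneg hf0)
  have hρg0 : ∀ x ∈ Ioc (0:ℝ) t, 0 ≤ ρg x := fun x hx =>
    add_nonneg (mul_nonneg hl.le hx.1.le) (prim_nonneg hg0)
  rw [setLIntegral_congr_fun measurableSet_Ioc (hlayer f ρf hf0 hρf0),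
      setLIntegral_congr_fun measurableSet_Ioc (hlayer g ρg hg0 hρg0)]
  -- step 2 : swap
  have hswapf : ∫⁻ x in Ioc 0 t, ∫⁻ u in Ioi (0:ℝ), Gf (x, u) =
      ∫⁻ u in Ioi (0:ℝ), ∫⁻ x in Ioc 0 t, Gf (x, u) := by
    apply lintegral_lintegral_swap
    apply Measurable.aemeasurable
    have : Function.uncurry (fun x u => Gf (x, u)) = Gf := by
      funext p; simp [Function.uncurry]
    rw [this]; exact hGfm
  have hswapg : ∫⁻ x in Ioc 0 t, ∫⁻ u in Ioi (0:ℝ), Gg (x, u) =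
      ∫⁻ u in Ioi (0:ℝ), ∫⁻ x in Ioc 0 t, Gg (x, u) := by
    apply lintegral_lintegral_swap
    apply Measurable.aemeasurable
    have : Function.uncurry (fun x u => Gg (x, u)) = Gg := by
      funext p; simp [Function.uncurry]
    rw [this]; exact hGgm
  show ∫⁻ x in Ioc 0 t, ∫⁻ u in Ioi (0:ℝ), Gf (x, u) ≤
    ∫⁻ x in Ioc 0 t, ∫⁻ u in Ioi (0:ℝ), Gg (x, u)
  rw [hswapf, hswapg]
  -- step 3 : compare the inner integrals for each u > 0
  refine setLIntegral_mono' measurableSet_Ioi (fun u hu => ?_)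
  have hu0 : (0:ℝ) ≤ u := (le_of_lt hu)
  -- rewrite inner integrals
  have hinner : ∀ (h : ℝ → ℝ) (ρ : ℝ → ℝ), Measurable h → Continuous ρ →
      (∫⁻ x in Ioc 0 t, ENNReal.ofReal (h x) *
        ({q : ℝ × ℝ | ρ q.1 < q.2}.indicator (fun q => ENNReal.ofReal (Real.exp (-q.2))) (x, u)))
      = ENNReal.ofReal (Real.exp (-u)) * ∫⁻ x in {x | ρ x < u} ∩ Ioc 0 t, ENNReal.ofReal (h x) := by
    intro h ρ hhm hρc
    have hSu : MeasurableSet {x : ℝ | ρ x < u} :=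
      measurableSet_lt hρc.measurable measurable_const
    have heq : ∀ x, ENNReal.ofReal (h x) *
        ({q : ℝ × ℝ | ρ q.1 < q.2}.indicator (fun q => ENNReal.ofReal (Real.exp (-q.2))) (x, u))
        = ENNReal.ofReal (Real.exp (-u)) *
          ({x | ρ x < u}.indicator (fun x => ENNReal.ofReal (h x)) x) := by
      intro x
      simp only [indicator_apply, mem_setOf_eq]
      by_cases hc : ρ x < u
      · simp only [if_pos hc, mul_comm]
      · simp only [if_neg hc, mul_zero, zero_mul]
    simp only [heq]
    rw [lintegral_const_mul _ (hhm.ennreal_ofReal.indicator hSu)]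
    rw [lintegral_indicator hSu, Measure.restrict_restrict hSu]
  rw [hinner f ρf hfm hρfc, hinner g ρg hgm hρgc]
  -- step 4 : use inner_eq on both sides and compare
  obtain ⟨rf, hrf, hf_eq, hfd⟩ := inner_eq (f := f) hl ht hf0 hfint (u := u) hu0
  obtain ⟨rg, hrg, hg_eq, hgd⟩ := inner_eq (f := g) hl ht hg0 hgint (u := u) hu0
  rw [hf_eq, hg_eq]
  refine mul_le_mul_right (ENNReal.ofReal_le_ofReal ?_) _
  -- the four cases
  have hPfg : ∀ r ∈ Icc (0:ℝ) t, prim f t r ≤ prim g t r :=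
    fun r hr => prim_le_prim hfint hgint hfg hr
  have hsf : StrictMonoOn (fun x => l * x + prim f t x) (Icc 0 t) :=
    rho_strictMonoOn hl hf0 hfint
  have hsg : StrictMonoOn (fun x => l * x + prim g t x) (Icc 0 t) :=
    rho_strictMonoOn hl hg0 hgint
  have htI : t ∈ Icc (0:ℝ) t := ⟨ht, le_rfl⟩
  rcases hfd with hDf | ⟨hat, hft⟩ <;> rcases hgd with hDg | ⟨hct, hgt⟩
  · -- both interior
    have hca : rg ≤ rf := by
      by_contra hcon
      push_neg at hcon
      have h1 : prim f t rf ≤ prim g t rf := hPfg rf hrf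
      have h2 : l * rf + prim g t rf < l * rg + prim g t rg := hsg hrf hrg hcon
      linarith
    have := mul_le_mul_of_nonneg_left hca hl.le
    linarith
  · -- f interior, g truncated at t
    have h1 : l * rf + prim f t rf ≤ l * t + prim f t t := by
      rcases eq_or_lt_of_le hrf.2 with h | h
      · rw [h]
      · have h3 : l * rf + prim f t rf < l * t + prim f t t := hsf hrf htI h
        linarith
    have h2 : prim f t t ≤ prim g t t := hPfg t htI
    have hrft : rf = t := by
      by_contra hcon
      have hlt : rf < t := lt_of_le_of_ne hrf.2 hcon
      have h3 : l * rf + prim f t rf < l * t + prim f t t := hsf hrf htI hlt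
      linarith
    rw [hrft, hct]
    exact h2
  · -- f truncated, g interior
    have h2 : l * rg ≤ l * t := mul_le_mul_of_nonneg_left hrg.2 hl.le
    rw [hat]
    linarith
  · rw [hat, hct]
    exact hPfg t htI
/-- lintegral over an increasing exhaustion by `Ioc 0 (t n)`. -/
lemma lintegral_exhaust {F : ℝ → ENNReal} {t : ℕ → ℝ} (hmt : Monotone t)
    {s : Set ℝ} (hs : MeasurableSet s) (hsu : s = ⋃ n, Ioc 0 (t n))
    (hF : AEMeasurable F (volume.restrict s)) :
    ∫⁻ x in s, F x = ⨆ n, ∫⁻ x in Ioc 0 (t n), F x := by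
  have hsub : ∀ n, Ioc (0:ℝ) (t n) ⊆ s := fun n => by
    rw [hsu]; exact subset_iUnion (fun n => Ioc (0:ℝ) (t n)) n
  have key : ∫⁻ x in s, F x = ∫⁻ x in s, ⨆ n, (Ioc (0:ℝ) (t n)).indicator F x := by
    refine setLIntegral_congr_fun hs (fun x hx => ?_)
    have : ∃ n, x ∈ Ioc (0:ℝ) (t n) := by
      rw [hsu] at hx; exact mem_iUnion.1 hx
    obtain ⟨n, hn⟩ := this
    refine le_antisymm ?_ ?_
    · exact (indicator_of_mem hn F).symm.le.trans
        (le_iSup (fun n => (Ioc (0:ℝ) (t n)).indicator F x) n)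
    · exact iSup_le (fun n => indicator_le_self _ _ x)
  rw [key, lintegral_iSup' (fun n => hF.indicator measurableSet_Ioc)
    (ae_of_all _ (fun x m n hmn => by
      refine indicator_le_indicator_of_subset (Ioc_subset_Ioc_right (hmt hmn)) ?_ x
      exact fun _ => zero_le))]
  refine iSup_congr (fun n => ?_)
  rw [lintegral_indicator measurableSet_Ioc, Measure.restrict_restrict measurableSet_Ioc,
    inter_eq_left.2 (hsub n)]

/-- Main comparison of the two lintegrals, handling junk interval integrals. -/
lemma comparison {b l : ℝ} (hb : 0 < b) (hl : 0 < l) {B Bt : ℝ → ℝ}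
    (hBm : Measurable B) (hBtm : Measurable Bt)
    (hBb : ∀ x, 0 ≤ x → b ≤ B x) (hBBt : ∀ x, 0 ≤ x → B x ≤ Bt x)
    (hmeasB : AEMeasurable
      (fun x => ENNReal.ofReal (B x * Real.exp (-(l * x + ∫ y in (0:ℝ)..x, B y))))
      (volume.restrict (Ioi 0)))
    (hmeasBt : AEMeasurable
      (fun x => ENNReal.ofReal (Bt x * Real.exp (-(l * x + ∫ y in (0:ℝ)..x, Bt y))))
      (volume.restrict (Ioi 0))) :
    (∫⁻ x in Ioi (0:ℝ), ENNReal.ofReal (B x * Real.exp (-(l * x + ∫ y in (0:ℝ)..x, B y)))) ≤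
      ∫⁻ x in Ioi (0:ℝ), ENNReal.ofReal (Bt x * Real.exp (-(l * x + ∫ y in (0:ℝ)..x, Bt y))) := by
  set FB : ℝ → ENNReal :=
    fun x => ENNReal.ofReal (B x * Real.exp (-(l * x + ∫ y in (0:ℝ)..x, B y))) with hFB
  set FBt : ℝ → ENNReal :=
    fun x => ENNReal.ofReal (Bt x * Real.exp (-(l * x + ∫ y in (0:ℝ)..x, Bt y))) with hFBt
  have hB0 : ∀ x, 0 ≤ x → 0 ≤ B x := fun x hx => hb.le.trans (hBb x hx)
  have hBt0 : ∀ x, 0 ≤ x → 0 ≤ Bt x := fun x hx => (hB0 x hx).trans (hBBt x hx)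
  have hJB0 : ∀ x, 0 ≤ x → 0 ≤ ∫ y in (0:ℝ)..x, B y := fun x hx =>
    intervalIntegral.integral_nonneg hx (fun y hy => hB0 y hy.1)
  -- pointwise comparison where Bt is not integrable near 0..x
  have pw : ∀ x, 0 < x → ¬ IntegrableOn Bt (Ioc 0 x) → FB x ≤ FBt x := by
    intro x hx hni
    have hJt : (∫ y in (0:ℝ)..x, Bt y) = 0 := by
      apply intervalIntegral.integral_undef
      rw [intervalIntegrable_iff, uIoc_of_le hx.le]
      exact hni
    rw [hFB, hFBt]
    dsimp only
    rw [hJt]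
    refine ENNReal.ofReal_le_ofReal ?_
    have h1 : Real.exp (-(l * x + ∫ y in (0:ℝ)..x, B y)) ≤ Real.exp (-(l * x + 0)) := by
      refine Real.exp_le_exp.2 ?_
      have := hJB0 x hx.le
      linarith
    calc B x * Real.exp (-(l * x + ∫ y in (0:ℝ)..x, B y))
        ≤ B x * Real.exp (-(l * x + 0)) :=
          mul_le_mul_of_nonneg_left h1 (hB0 x hx.le)
      _ ≤ Bt x * Real.exp (-(l * x + 0)) :=
          mul_le_mul_of_nonneg_right (hBBt x hx.le) (Real.exp_pos _).le
  -- per-interval comparison where Bt is integrable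
  have pert : ∀ t : ℝ, 0 < t → IntegrableOn Bt (Ioc 0 t) →
      (∫⁻ x in Ioc 0 t, FB x) ≤ ∫⁻ x in Ioc 0 t, FBt x := by
    intro t ht hint
    have hint' : IntegrableOn Bt (Icc 0 t) := by
      rw [integrableOn_Icc_iff_integrableOn_Ioc]; exact hint
    have hrw : ∀ (f : ℝ → ℝ), ∀ x ∈ Ioc (0:ℝ) t,
        ENNReal.ofReal (f x * Real.exp (-(l * x + ∫ y in (0:ℝ)..x, f y))) =
        ENNReal.ofReal (f x * Real.exp (-(l * x + prim f t x))) := by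
      intro f x hx
      rw [intervalIntegral.integral_of_le hx.1.le, ← prim_eq f hx.1.le hx.2]
    rw [setLIntegral_congr_fun measurableSet_Ioc (hrw B),
        setLIntegral_congr_fun measurableSet_Ioc (hrw Bt)]
    exact core hl ht.le hBm hBtm hB0 hBBt hint'
  -- split according to the set where Bt is locally integrable
  set T : Set ℝ := {x | 0 < x ∧ IntegrableOn Bt (Ioc 0 x)} with hT
  have Tdc : ∀ x ∈ T, ∀ y, 0 < y → y ≤ x → y ∈ T := by
    intro x hx y hy hyx
    exact ⟨hy, hx.2.mono_set (Ioc_subset_Ioc_right hyx)⟩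
  rcases eq_empty_or_nonempty T with hTe | hTne
  · -- nowhere integrable : pointwise comparison everywhere
    refine setLIntegral_mono_ae (hmeasBt) (ae_of_all _ (fun x hx => ?_))
    refine pw x hx (fun h => ?_)
    have : x ∈ T := ⟨hx, h⟩
    rw [hTe] at this; exact this
  by_cases hbdd : BddAbove T
  · -- bounded case
    set c := sSup T with hc
    obtain ⟨x0, hx0⟩ := id hTne
    have hc0 : 0 < c := lt_of_lt_of_le hx0.1 (le_csSup hbdd hx0)
    have hIoo : Ioo 0 c ⊆ T := by
      intro x hx
      obtain ⟨y, hy, hxy⟩ := exists_lt_of_lt_csSup hTne hx.2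
      exact Tdc y hy x hx.1 hxy.le
    have hsplit : Ioi (0:ℝ) = Ioo 0 c ∪ Ici c := (Ioo_union_Ici_eq_Ioi hc0).symm
    have hdisj : Disjoint (Ioo (0:ℝ) c) (Ici c) :=
      disjoint_left.2 (fun x hx hx' => absurd hx.2 (not_lt.2 hx'))
    rw [hsplit, lintegral_union measurableSet_Ici hdisj,
        lintegral_union measurableSet_Ici hdisj]
    have hrestr : ∀ (F : ℝ → ENNReal), AEMeasurable F (volume.restrict (Ioi 0)) →
        AEMeasurable F (volume.restrict (Ioo 0 c)) := by
      intro F hF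
      have : volume.restrict (Ioo (0:ℝ) c) = (volume.restrict (Ioi 0)).restrict (Ioo 0 c) := by
        rw [Measure.restrict_restrict measurableSet_Ioo,
          inter_eq_left.2 Ioo_subset_Ioi_self]
      rw [this]
      exact hF.restrict
    refine add_le_add ?_ ?_
    · -- Ioo 0 c part via exhaustion
      set tseq : ℕ → ℝ := fun n => c - c / 2 / (n + 1) with htseq
      have htpos : ∀ n : ℕ, 0 < c / 2 / ((n:ℝ) + 1) := by
        intro n
        have h1 : (0:ℝ) < (n:ℝ) + 1 := by positivity
        have h2 : (0:ℝ) < c / 2 := by linarith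
        exact div_pos h2 h1
      have htlec2 : ∀ n : ℕ, c / 2 / ((n:ℝ) + 1) ≤ c / 2 := fun n =>
        div_le_div_of_nonneg_left (by linarith : (0:ℝ) ≤ c / 2) one_pos
          (by linarith [Nat.cast_nonneg (α := ℝ) n] : (1:ℝ) ≤ (n:ℝ) + 1) |>.trans_eq (div_one _)
      have htmono : Monotone tseq := by
        intro mm nn hmn
        have h1 : ((mm:ℝ) + 1) ≤ ((nn:ℝ) + 1) := by
          have : (mm:ℝ) ≤ nn := Nat.cast_le.2 hmn
          linarith
        have h2 : c / 2 / ((nn:ℝ) + 1) ≤ c / 2 / ((mm:ℝ) + 1) :=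
          div_le_div_of_nonneg_left (by linarith : (0:ℝ) ≤ c / 2) (by positivity) h1
        simp only [htseq]
        linarith
      have htlt : ∀ n, tseq n < c := fun n => by
        have := htpos n
        simp only [htseq]
        linarith
      have htpos' : ∀ n, 0 < tseq n := fun n => by
        have := htlec2 n
        simp only [htseq]
        linarith
      have hsu : Ioo (0:ℝ) c = ⋃ n, Ioc 0 (tseq n) := by
        ext x
        simp only [mem_Ioo, mem_iUnion, mem_Ioc]
        constructor
        · rintro ⟨hx1, hx2⟩
          have hcx : 0 < c - x := by linarith
          obtain ⟨n, hn⟩ := exists_nat_gt (c / 2 / (c - x))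
          refine ⟨n, hx1, ?_⟩
          have hn1 : c / 2 / (c - x) < (n:ℝ) + 1 := by linarith
          have h3 : c / 2 < ((n:ℝ) + 1) * (c - x) := (div_lt_iff₀ hcx).1 hn1
          have h4 : c / 2 / ((n:ℝ) + 1) < c - x := by
            rw [div_lt_iff₀ (by positivity : (0:ℝ) < (n:ℝ) + 1)]
            nlinarith
          simp only [htseq]
          linarith
        · rintro ⟨n, hn1, hn2⟩
          exact ⟨hn1, lt_of_le_of_lt hn2 (htlt n)⟩
      rw [lintegral_exhaust htmono measurableSet_Ioo hsu (hrestr _ hmeasB),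
          lintegral_exhaust htmono measurableSet_Ioo hsu (hrestr _ hmeasBt)]
      exact iSup_mono (fun n => pert (tseq n) (htpos' n) (hIoo ⟨htpos' n, htlt n⟩).2)
    · -- Ici c part : pointwise comparison
      rw [setLIntegral_congr (μ := volume) (Ioi_ae_eq_Ici (a := c)).symm,
          setLIntegral_congr (μ := volume) (Ioi_ae_eq_Ici (a := c)).symm]
      have hms : AEMeasurable FBt (volume.restrict (Ioi c)) := by
        have : volume.restrict (Ioi c) = (volume.restrict (Ioi 0)).restrict (Ioi c) := by
          rw [Measure.restrict_restrict measurableSet_Ioi, Ioi_inter_Ioi, max_eq_left hc0.le]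
        rw [this]
        exact hmeasBt.restrict
      refine setLIntegral_mono_ae hms (ae_of_all _ (fun x hx => ?_))
      refine pw x (hc0.trans hx) (fun h => ?_)
      have hxT : x ∈ T := ⟨hc0.trans hx, h⟩
      exact absurd (le_csSup hbdd hxT) (not_le.2 hx)
  · -- unbounded case : Bt locally integrable everywhere
    have hTall : ∀ x, 0 < x → x ∈ T := by
      intro x hx
      obtain ⟨y, hy, hxy⟩ := not_bddAbove_iff.1 hbdd x
      exact Tdc y hy x hx hxy.le
    have hsu : Ioi (0:ℝ) = ⋃ n : ℕ, Ioc 0 ((n:ℝ) + 1) := by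
      ext x
      simp only [mem_Ioi, mem_iUnion, mem_Ioc]
      constructor
      · intro hx
        obtain ⟨n, hn⟩ := exists_nat_gt x
        exact ⟨n, hx, by linarith⟩
      · rintro ⟨n, hn, _⟩
        exact hn
    have hmt : Monotone (fun n : ℕ => (n:ℝ) + 1) := by
      intro mm nn h
      have : (mm:ℝ) ≤ nn := Nat.cast_le.2 h
      simp only
      linarith
    rw [lintegral_exhaust hmt measurableSet_Ioi hsu hmeasB,
        lintegral_exhaust hmt measurableSet_Ioi hsu hmeasBt]
    refine iSup_mono (fun n => ?_)
    have hp : (0:ℝ) < (n:ℝ) + 1 := by positivity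
    exact pert _ hp (hTall _ hp).2
end MalthusAux

open MalthusAux

/-- Monotonicity of the Malthus parameter: if `b ≤ B(x) ≤ B̃(x)` for all `x ≥ 0`,
then the associated Malthus parameters satisfy `λ_B ≤ λ_{B̃}`. -/
theorem stmt_3 (m b : ℝ) (hm : 1 < m) (hb : 0 < b)
    (B Bt : ℝ → ℝ) (hBmeas : Measurable B) (hBtmeas : Measurable Bt)
    (hBb : ∀ x, 0 ≤ x → b ≤ B x) (hBBt : ∀ x, 0 ≤ x → B x ≤ Bt x)
    (lamB lamBt : ℝ) (hlamB : 0 < lamB) (hlamBt : 0 < lamBt)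
    (heqB : ∫ x in Ioi (0:ℝ),
        B x * Real.exp (-lamB * x - ∫ y in (0:ℝ)..x, B y) = 1 / m)
    (heqBt : ∫ x in Ioi (0:ℝ),
        Bt x * Real.exp (-lamBt * x - ∫ y in (0:ℝ)..x, Bt y) = 1 / m) :
    lamB ≤ lamBt := by
  by_contra hcon
  push_neg at hcon
  have hm0 : (0:ℝ) < 1 / m := by positivity
  -- integrands
  set J : ℝ → ℝ := fun x => ∫ y in (0:ℝ)..x, B y with hJ
  set Jt : ℝ → ℝ := fun x => ∫ y in (0:ℝ)..x, Bt y with hJt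
  set fB : ℝ → ℝ := fun x => B x * Real.exp (-lamB * x - J x) with hfB
  set gB : ℝ → ℝ := fun x => B x * Real.exp (-lamBt * x - J x) with hgB
  set gBt : ℝ → ℝ := fun x => Bt x * Real.exp (-lamBt * x - Jt x) with hgBt
  -- integrability of fB and gBt from the hypotheses
  have hfBint : IntegrableOn fB (Ioi 0) := by
    by_contra h
    rw [integral_undef h] at heqB
    exact absurd heqB.symm (ne_of_gt hm0)
  have hgBtint : IntegrableOn gBt (Ioi 0) := by
    by_contra h
    rw [integral_undef h] at heqBt
    exact absurd heqBt.symm (ne_of_gt hm0)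
  have hB0 : ∀ x, 0 ≤ x → 0 ≤ B x := fun x hx => hb.le.trans (hBb x hx)
  have hBt0 : ∀ x, 0 ≤ x → 0 ≤ Bt x := fun x hx => (hB0 x hx).trans (hBBt x hx)
  have hfB0 : ∀ᵐ x ∂(volume.restrict (Ioi (0:ℝ))), 0 ≤ fB x :=
    (ae_restrict_iff' measurableSet_Ioi).2 (ae_of_all _ (fun x hx =>
      mul_nonneg (hB0 x (le_of_lt hx)) (exp_pos _).le))
  have hgBt0 : ∀ᵐ x ∂(volume.restrict (Ioi (0:ℝ))), 0 ≤ gBt x :=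
    (ae_restrict_iff' measurableSet_Ioi).2 (ae_of_all _ (fun x hx =>
      mul_nonneg (hBt0 x (le_of_lt hx)) (exp_pos _).le))
  -- lintegral values
  have lB : ∫⁻ x in Ioi (0:ℝ), ENNReal.ofReal (fB x) = ENNReal.ofReal (1/m) := by
    rw [← ofReal_integral_eq_lintegral_ofReal hfBint hfB0, heqB]
  have lBt : ∫⁻ x in Ioi (0:ℝ), ENNReal.ofReal (gBt x) = ENNReal.ofReal (1/m) := by
    rw [← ofReal_integral_eq_lintegral_ofReal hgBtint hgBt0, heqBt]
  -- aemeasurability of gB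
  have hfBae : AEMeasurable fB (volume.restrict (Ioi 0)) := hfBint.aemeasurable
  have hgBeq : gB = fun x => fB x * Real.exp ((lamB - lamBt) * x) := by
    funext x
    simp only [hgB, hfB, mul_assoc, ← exp_add]
    ring_nf
  have hgBae : AEMeasurable gB (volume.restrict (Ioi 0)) := by
    rw [hgBeq]
    exact hfBae.mul (Continuous.aemeasurable (by continuity))
  -- strict monotonicity in λ
  have key1 : (∫⁻ x in Ioi (0:ℝ), ENNReal.ofReal (fB x)) <
      ∫⁻ x in Ioi (0:ℝ), ENNReal.ofReal (gB x) := by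
    refine lintegral_strict_mono ?_ hgBae.ennreal_ofReal ?_ ?_
    · rw [Ne, Measure.restrict_eq_zero]
      simp [Real.volume_Ioi]
    · rw [lB]; exact ENNReal.ofReal_ne_top
    · refine (ae_restrict_iff' measurableSet_Ioi).2 (ae_of_all _ (fun x hx => ?_))
      have hBpos : 0 < B x := lt_of_lt_of_le hb (hBb x (le_of_lt hx))
      have hexp : Real.exp (-lamB * x - J x) < Real.exp (-lamBt * x - J x) := by
        refine Real.exp_lt_exp.2 ?_
        have : lamBt * x < lamB * x := mul_lt_mul_of_pos_right hcon hx
        linarith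
      have hlt : fB x < gB x := by
        rw [hfB, hgB]
        exact mul_lt_mul_of_pos_left hexp hBpos
      refine (ENNReal.ofReal_lt_ofReal_iff ?_).2 hlt
      have : 0 < fB x := by
        rw [hfB]
        exact mul_pos hBpos (exp_pos _)
      linarith
  -- comparison between B and Bt at rate lamBt
  have hgBtae : AEMeasurable gBt (volume.restrict (Ioi 0)) := hgBtint.aemeasurable
  have e1 : ∀ x, gB x = B x * Real.exp (-(lamBt * x + ∫ y in (0:ℝ)..x, B y)) := by
    intro x
    simp only [hgB, hJ]
    rw [show -lamBt * x - (∫ y in (0:ℝ)..x, B y) = -(lamBt * x + ∫ y in (0:ℝ)..x, B y)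
      from by ring]
  have e2 : ∀ x, gBt x = Bt x * Real.exp (-(lamBt * x + ∫ y in (0:ℝ)..x, Bt y)) := by
    intro x
    simp only [hgBt, hJt]
    rw [show -lamBt * x - (∫ y in (0:ℝ)..x, Bt y) = -(lamBt * x + ∫ y in (0:ℝ)..x, Bt y)
      from by ring]
  have key2 : (∫⁻ x in Ioi (0:ℝ), ENNReal.ofReal (gB x)) ≤
      ∫⁻ x in Ioi (0:ℝ), ENNReal.ofReal (gBt x) := by
    calc (∫⁻ x in Ioi (0:ℝ), ENNReal.ofReal (gB x))
        = ∫⁻ x in Ioi (0:ℝ),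
            ENNReal.ofReal (B x * Real.exp (-(lamBt * x + ∫ y in (0:ℝ)..x, B y))) := by
          simp only [e1]
      _ ≤ ∫⁻ x in Ioi (0:ℝ),
            ENNReal.ofReal (Bt x * Real.exp (-(lamBt * x + ∫ y in (0:ℝ)..x, Bt y))) := by
          refine comparison hb hlamBt hBmeas hBtmeas hBb hBBt ?_ ?_
          · simpa only [e1] using hgBae.ennreal_ofReal
          · simpa only [e2] using hgBtae.ennreal_ofReal
      _ = ∫⁻ x in Ioi (0:ℝ), ENNReal.ofReal (gBt x) := by
          simp only [e2]
  rw [lB, lBt] at *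
  exact absurd (lt_of_lt_of_le key1 (key2.trans lBt.le)) (lt_irrefl _)
end

section
/- If B ∈ 𝔹_{b,m} (i.e. b ≤ B(x) ≤ (m/(m-1))b and B'(x) - B(x)² ≤ 0 for all x), then the function G_B(x) = m e^{-λ_B x} B(x) e^{-∫₀^x B} - λ_B (1 - m∫₀^x e^{-λ_B y} B(y) e^{-∫₀^y B} dy) has derivative G_B'(x) = m e^{-λ_B x} e^{-∫₀^x B(y)dy} (B'(x) - B(x)²) ≤ 0, satisfies G_B(0) = mB(0) - λ_B ≥ 0 and G_B(x) → 0 as x → ∞; hence G_B ≥ 0 on [0,∞), i.e. λ_B ≤ inf_x H_B(x). -/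
open Real MeasureTheory Set

private lemma ftc_helper {f : ℝ → ℝ} (hf : Continuous f) (a x : ℝ) :
    HasDerivAt (fun u => ∫ y in a..u, f y) (f x) x :=
  intervalIntegral.integral_hasDerivAt_right (hf.intervalIntegrable _ _)
    (hf.stronglyMeasurableAtFilter _ _) hf.continuousAt

/-- If `B ∈ 𝔹_{b,m}` (`b ≤ B ≤ mb/(m-1)` and `B' - B² ≤ 0`), then
`G_B(x) = m e^{-λ_B x} B(x) e^{-∫₀^x B} - λ_B (1 - m ∫₀^x e^{-λ_B y} B(y) e^{-∫₀^y B} dy)`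
has derivative `G_B'(x) = m e^{-λ_B x} e^{-∫₀^x B}(B'(x) - B(x)²) ≤ 0`, satisfies
`G_B(0) = mB(0) - λ_B ≥ 0` and `G_B(x) → 0` as `x → ∞`; hence `G_B ≥ 0` on `[0,∞)`,
i.e. `λ_B ≤ H_B(x)` for every `x ≥ 0`. -/
theorem stmt_15 (m b : ℝ) (hm : 2 ≤ m) (hb : 0 < b)
    (B : ℝ → ℝ) (hBdiff : Differentiable ℝ B) (hBderiv : Continuous (deriv B))
    (hBlb : ∀ x, 0 ≤ x → b ≤ B x) (hBub : ∀ x, 0 ≤ x → B x ≤ m * b / (m - 1))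
    (hBconc : ∀ x, 0 ≤ x → deriv B x - (B x) ^ 2 ≤ 0)
    (lamB : ℝ) (hlamB : 0 < lamB) (hlamUB : lamB ≤ m * b)
    (heq : ∫ x in Ioi (0:ℝ),
        B x * Real.exp (-lamB * x - ∫ y in (0:ℝ)..x, B y) = 1 / m)
    (G : ℝ → ℝ)
    (hG : ∀ x, G x =
      m * Real.exp (-lamB * x) * B x * Real.exp (-∫ y in (0:ℝ)..x, B y)
        - lamB * (1 - m * ∫ y in (0:ℝ)..x,
            Real.exp (-lamB * y) * B y * Real.exp (-∫ u in (0:ℝ)..y, B u)))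
    (HB : ℝ → ℝ)
    (hHB : ∀ x, 0 ≤ x → HB x =
      m * Real.exp (-lamB * x) * B x * Real.exp (-∫ y in (0:ℝ)..x, B y) /
        (1 - m * ∫ y in (0:ℝ)..x,
            Real.exp (-lamB * y) * B y * Real.exp (-∫ u in (0:ℝ)..y, B u)))
    (hden : ∀ x, 0 ≤ x →
      0 < 1 - m * ∫ y in (0:ℝ)..x,
            Real.exp (-lamB * y) * B y * Real.exp (-∫ u in (0:ℝ)..y, B u)) :
    (∀ x, 0 ≤ x → deriv G x =
        m * Real.exp (-lamB * x) * Real.exp (-∫ y in (0:ℝ)..x, B y)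
          * (deriv B x - (B x) ^ 2)) ∧
    (∀ x, 0 ≤ x → deriv G x ≤ 0) ∧
    G 0 = m * B 0 - lamB ∧ 0 ≤ G 0 ∧
    Filter.Tendsto G Filter.atTop (nhds 0) ∧
    (∀ x, 0 ≤ x → 0 ≤ G x) ∧
    (∀ x, 0 ≤ x → lamB ≤ HB x) := by
  have hBc : Continuous B := hBdiff.continuous
  have hm0 : (0:ℝ) < m := by linarith
  set F : ℝ → ℝ := fun x => ∫ y in (0:ℝ)..x, B y with hFdef
  have hF : ∀ x, HasDerivAt F (B x) x := fun x => ftc_helper hBc 0 x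
  have hFc : Continuous F :=
    continuous_iff_continuousAt.mpr (fun x => ((hF x).differentiableAt).continuousAt)
  set phi : ℝ → ℝ := fun y => Real.exp (-lamB * y) * B y * Real.exp (-F y) with hphidef
  have hphic : Continuous phi := by
    apply Continuous.mul
    · exact (Real.continuous_exp.comp (continuous_const.mul continuous_id)).mul hBc
    · exact Real.continuous_exp.comp hFc.neg
  set Phi : ℝ → ℝ := fun x => ∫ y in (0:ℝ)..x, phi y with hPhidef
  have hPhi : ∀ x, HasDerivAt Phi (phi x) x := fun x => ftc_helper hphic 0 x
  -- G as explicit function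
  have hGfun : G = fun x => m * Real.exp (-lamB * x) * B x * Real.exp (-F x)
      - lamB * (1 - m * Phi x) := funext hG
  -- derivative of G
  have hGd : ∀ x, HasDerivAt G
      (m * Real.exp (-lamB * x) * Real.exp (-F x) * (deriv B x - (B x) ^ 2)) x := by
    intro x
    have h1 : HasDerivAt (fun x => Real.exp (-lamB * x)) (Real.exp (-lamB * x) * (-lamB)) x := by
      have := ((hasDerivAt_id x).const_mul (-lamB)).exp
      simpa using this
    have h2 : HasDerivAt (fun x => Real.exp (-F x)) (Real.exp (-F x) * (-B x)) x := by
      have := ((hF x).neg).exp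
      simpa using this
    have hB' : HasDerivAt B (deriv B x) x := (hBdiff x).hasDerivAt
    have h3 : HasDerivAt (fun x => m * Real.exp (-lamB * x) * B x * Real.exp (-F x))
        (((m * (Real.exp (-lamB * x) * (-lamB))) * B x
            + m * Real.exp (-lamB * x) * deriv B x) * Real.exp (-F x)
          + m * Real.exp (-lamB * x) * B x * (Real.exp (-F x) * (-B x))) x :=
      (((h1.const_mul m).mul hB').mul h2)
    have h4 : HasDerivAt (fun x => lamB * (1 - m * Phi x))
        (lamB * (0 - m * phi x)) x :=
      ((hasDerivAt_const x (1:ℝ)).sub ((hPhi x).const_mul m)).const_mul lamB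
    rw [hGfun]
    refine (h3.sub h4).congr_deriv ?_
    simp only [hphidef]
    ring
  have hderiv_eq : ∀ x, deriv G x
      = m * Real.exp (-lamB * x) * Real.exp (-F x) * (deriv B x - (B x) ^ 2) :=
    fun x => (hGd x).deriv
  have hGdiff : Differentiable ℝ G := fun x => (hGd x).differentiableAt
  -- part 1
  have P1 : ∀ x, 0 ≤ x → deriv G x =
      m * Real.exp (-lamB * x) * Real.exp (-∫ y in (0:ℝ)..x, B y) * (deriv B x - (B x) ^ 2) :=
    fun x _ => hderiv_eq x
  -- part 2
  have P2 : ∀ x, 0 ≤ x → deriv G x ≤ 0 := by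
    intro x hx
    rw [hderiv_eq x]
    have h1 : 0 ≤ m * Real.exp (-lamB * x) * Real.exp (-F x) := by positivity
    exact mul_nonpos_of_nonneg_of_nonpos h1 (hBconc x hx)
  -- part 3
  have P3 : G 0 = m * B 0 - lamB := by
    rw [hG 0]
    simp
  have P4 : 0 ≤ G 0 := by
    rw [P3]
    have := hBlb 0 le_rfl
    nlinarith
  -- integral facts
  have hFnonneg : ∀ x, 0 ≤ x → 0 ≤ F x := by
    intro x hx
    apply intervalIntegral.integral_nonneg hx
    intro u hu
    exact le_trans hb.le (hBlb u hu.1)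
  have hphi_eq : ∀ y, phi y = B y * Real.exp (-lamB * y - F y) := by
    intro y
    simp only [hphidef]
    rw [show -lamB * y - F y = -lamB * y + (-F y) by ring, Real.exp_add]
    ring
  have hphi_nonneg : ∀ y, 0 ≤ y → 0 ≤ phi y := by
    intro y hy
    have := hBlb y hy
    have h1 : 0 ≤ B y := le_trans hb.le this
    positivity
  have hphi_bound : ∀ y, 0 ≤ y → phi y ≤ (m * b / (m - 1)) * Real.exp (-lamB * y) := by
    intro y hy
    have h1 : Real.exp (-F y) ≤ 1 := Real.exp_le_one_iff.mpr (by linarith [hFnonneg y hy])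
    have h2 : B y ≤ m * b / (m - 1) := hBub y hy
    have h3 : 0 ≤ B y := le_trans hb.le (hBlb y hy)
    calc phi y = Real.exp (-lamB * y) * B y * Real.exp (-F y) := rfl
      _ ≤ Real.exp (-lamB * y) * B y * 1 := by
          apply mul_le_mul_of_nonneg_left h1; positivity
      _ = Real.exp (-lamB * y) * B y := by ring
      _ ≤ Real.exp (-lamB * y) * (m * b / (m - 1)) := by
          apply mul_le_mul_of_nonneg_left h2 (Real.exp_pos _).le
      _ = (m * b / (m - 1)) * Real.exp (-lamB * y) := by ring
  have hintexp : IntegrableOn (fun y => (m * b / (m - 1)) * Real.exp (-lamB * y)) (Ioi (0:ℝ)) :=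
    (exp_neg_integrableOn_Ioi 0 hlamB).const_mul _
  have hphiInt : IntegrableOn phi (Ioi (0:ℝ)) := by
    apply hintexp.mono' (hphic.aestronglyMeasurable.restrict)
    rw [ae_restrict_iff' measurableSet_Ioi]
    filter_upwards with y hy
    rw [Real.norm_eq_abs, abs_of_nonneg (hphi_nonneg y hy.le)]
    exact hphi_bound y hy.le
  have hphiIoi : ∫ y in Ioi (0:ℝ), phi y = 1 / m := by
    rw [← heq]
    apply setIntegral_congr_fun measurableSet_Ioi
    intro y _
    exact hphi_eq y
  have hPhiT : Filter.Tendsto Phi Filter.atTop (nhds (1 / m)) := by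
    rw [← hphiIoi]
    exact intervalIntegral_tendsto_integral_Ioi 0 hphiInt Filter.tendsto_id
  -- first term tends to 0
  have hT1 : Filter.Tendsto (fun x => m * Real.exp (-lamB * x) * B x * Real.exp (-F x))
      Filter.atTop (nhds 0) := by
    have hb0 : Filter.Tendsto (fun x : ℝ => m * (m * b / (m - 1)) * Real.exp (-lamB * x))
        Filter.atTop (nhds 0) := by
      have : Filter.Tendsto (fun x : ℝ => Real.exp (-lamB * x)) Filter.atTop (nhds 0) := by
        apply Real.tendsto_exp_atBot.comp
        exact Filter.Tendsto.const_mul_atTop_of_neg (neg_neg_iff_pos.mpr hlamB) Filter.tendsto_id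
      simpa using this.const_mul (m * (m * b / (m - 1)))
    apply squeeze_zero' (g := fun x => m * (m * b / (m - 1)) * Real.exp (-lamB * x)) _ _ hb0
    · filter_upwards [Filter.eventually_ge_atTop (0:ℝ)] with x hx
      have h1 : 0 ≤ B x := le_trans hb.le (hBlb x hx)
      positivity
    · filter_upwards [Filter.eventually_ge_atTop (0:ℝ)] with x hx
      have h1 : Real.exp (-F x) ≤ 1 := Real.exp_le_one_iff.mpr (by linarith [hFnonneg x hx])
      have h2 : B x ≤ m * b / (m - 1) := hBub x hx
      have h3 : 0 ≤ B x := le_trans hb.le (hBlb x hx)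
      have h4 : (0:ℝ) < Real.exp (-lamB * x) := Real.exp_pos _
      calc m * Real.exp (-lamB * x) * B x * Real.exp (-F x)
          ≤ m * Real.exp (-lamB * x) * B x * 1 := by
            apply mul_le_mul_of_nonneg_left h1; positivity
        _ = m * Real.exp (-lamB * x) * B x := by ring
        _ ≤ m * Real.exp (-lamB * x) * (m * b / (m - 1)) := by
            apply mul_le_mul_of_nonneg_left h2; positivity
        _ = m * (m * b / (m - 1)) * Real.exp (-lamB * x) := by ring
  have P5 : Filter.Tendsto G Filter.atTop (nhds 0) := by
    rw [hGfun]
    have hT2 : Filter.Tendsto (fun x => lamB * (1 - m * Phi x)) Filter.atTop (nhds 0) := by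
      have : Filter.Tendsto (fun x => lamB * (1 - m * Phi x)) Filter.atTop
          (nhds (lamB * (1 - m * (1 / m)))) :=
        (((hPhiT.const_mul m).const_sub 1).const_mul lamB)
      convert this using 2
      field_simp
      ring
    simpa using hT1.sub hT2
  -- antitone and nonneg
  have hanti : AntitoneOn G (Ici (0:ℝ)) := by
    apply antitoneOn_of_deriv_nonpos (convex_Ici 0) hGdiff.continuous.continuousOn
      (hGdiff.differentiableOn)
    intro x hx
    rw [interior_Ici] at hx
    exact P2 x (le_of_lt hx)
  have P6 : ∀ x, 0 ≤ x → 0 ≤ G x := by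
    intro x hx
    apply le_of_tendsto P5
    filter_upwards [Filter.eventually_ge_atTop x] with y hy
    exact hanti hx (le_trans hx hy) hy
  refine ⟨P1, P2, P3, P4, P5, P6, ?_⟩
  intro x hx
  rw [hHB x hx]
  rw [le_div_iff₀ (hden x hx)]
  have h6 := P6 x hx
  rw [hG x] at h6
  linarith
end

section
/- Kernel bias bound: let K be a kernel with compact support, ∫K = 1 and ∫ x^k K(x)dx = 0 for 1 ≤ k ≤ n₀, and let f be β-Hölder on an interval D with β ≤ n₀ (f has ⌊β⌋ derivatives and |f^{(⌊β⌋)}(y) - f^{(⌊β⌋)}(x)| ≤ L|x-y|^{β-⌊β⌋}). Then for x interior to D and h small enough, |∫ K_h(x-y) f(y) dy - f(x)| ≤ C L h^β, where K_h(u) = h^{-1}K(h^{-1}u) and C depends only on K and β. -/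
open Real MeasureTheory Set

lemma my_taylor_bound : ∀ (n : ℕ) (β L : ℝ) (f : ℝ → ℝ), (n:ℝ) < β → β ≤ n+1 → 0 ≤ L →
    ∀ (s : Set ℝ), IsOpen s → Convex ℝ s → ContDiffOn ℝ n f s →
    (∀ y ∈ s, ∀ z ∈ s, |iteratedDeriv n f z - iteratedDeriv n f y| ≤ L * |z - y| ^ (β - n)) →
    ∀ x ∈ s, ∀ t ∈ s,
      |f t - ∑ k ∈ Finset.range (n+1), iteratedDeriv k f x / (k.factorial : ℝ) * (t - x)^k|
        ≤ L * |t - x| ^ β := by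
  intro n
  induction n with
  | zero =>
    intro β L f hβ hβ' hL s hso hsc hf hH x hx t ht
    simpa using hH x hx t ht
  | succ n ih =>
    intro β L f hβ hβ' hL s hso hsc hf hH x hx t ht
    -- the derivative function
    set F := deriv f with hF
    have hf' : ContDiffOn ℝ n F s := by
      apply hf.deriv_of_isOpen hso
      exact_mod_cast le_refl ((n:ℕ∞)+1)
    have hH' : ∀ y ∈ s, ∀ z ∈ s,
        |iteratedDeriv n F z - iteratedDeriv n F y| ≤ L * |z - y| ^ ((β-1) - n) := by
      intro y hy z hz
      have := hH y hy z hz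
      rw [iteratedDeriv_succ'] at this
      convert this using 2
      push_cast; ring
    have hβ1 : (n:ℝ) < β - 1 := by push_cast at hβ ⊢; linarith
    have hβ1' : β - 1 ≤ n + 1 := by push_cast at hβ' ⊢; linarith
    have IH := ih (β-1) L F hβ1 hβ1' hL s hso hsc hf' hH'
    -- the remainder function
    set a : ℕ → ℝ := fun k => iteratedDeriv k f x / (k.factorial : ℝ) with ha
    set g : ℝ → ℝ := fun t => f t - ∑ k ∈ Finset.range (n+2), a k * (t - x)^k with hg
    have hsumx : ∑ k ∈ Finset.range (n+2), a k * (x - x)^k = f x := by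
      rw [Finset.sum_eq_single 0]
      · simp [ha]
      · intro b _ hb; simp [sub_self, zero_pow hb]
      · simp
    have hgx : g x = 0 := by
      have h0 : g x = f x - ∑ k ∈ Finset.range (n+2), a k * (x - x)^k := rfl
      rw [h0, hsumx, sub_self]
    have hgd : ∀ y ∈ s, HasDerivAt g
        (F y - ∑ k ∈ Finset.range (n+1), iteratedDeriv k F x / (k.factorial : ℝ) * (y - x)^k) y := by
      intro y hy
      have hfd : HasDerivAt f (F y) y := by
        have : DifferentiableAt ℝ f y := by
          have := (hf.differentiableOn (by simp)) y hy
          exact this.differentiableAt (hso.mem_nhds hy)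
        exact this.hasDerivAt
      have hpd : HasDerivAt (fun t => ∑ k ∈ Finset.range (n+2), a k * (t - x)^k)
          (∑ k ∈ Finset.range (n+2), a k * ((k:ℝ) * (y - x)^(k-1))) y := by
        apply HasDerivAt.fun_sum
        intro k _
        simpa using (((hasDerivAt_id y).sub_const x).pow k).const_mul (a k)
      have hsum : (∑ k ∈ Finset.range (n+2), a k * ((k:ℝ) * (y - x)^(k-1)))
          = ∑ k ∈ Finset.range (n+1), iteratedDeriv k F x / (k.factorial : ℝ) * (y - x)^k := by
        rw [Finset.sum_range_succ']
        simp only [Nat.cast_zero, zero_mul, mul_zero, add_zero]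
        apply Finset.sum_congr rfl
        intro k _
        have : iteratedDeriv k F x = iteratedDeriv (k+1) f x := (congrFun (iteratedDeriv_succ').symm x)
        rw [this, ha]
        have hfac : ((k+1).factorial : ℝ) = (k+1) * (k.factorial : ℝ) := by
          rw [Nat.factorial_succ]; push_cast; ring
        field_simp [hfac]
        simp only [show 1 + k = k + 1 by omega, Nat.add_sub_cancel]
        rw [hfac]; push_cast; ring
      have h := hfd.sub hpd; rw [hsum] at h; exact h
    -- mean value on segment
    by_cases htx : t = x
    · subst htx
      have hβ0 : (0:ℝ) < β := lt_of_le_of_lt (by positivity) hβ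
      show |g t| ≤ L * |t - t| ^ β
      rw [hgx, abs_zero, sub_self, abs_zero, Real.zero_rpow (ne_of_gt hβ0), mul_zero]
    · have hseg : segment ℝ x t ⊆ s := hsc.segment_subset hx ht
      have hbound : ∀ y ∈ segment ℝ x t,
          ‖F y - ∑ k ∈ Finset.range (n+1), iteratedDeriv k F x / (k.factorial : ℝ) * (y - x)^k‖
            ≤ L * |t - x| ^ (β - 1) := by
        intro y hy
        have h1 := IH x hx y (hseg hy)
        have h2 : |y - x| ≤ |t - x| := by
          rcases hy with ⟨p, q, hp, hq, hpq, rfl⟩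
          have : p • x + q • t - x = q * (t - x) := by
            simp only [smul_eq_mul]; linear_combination x * hpq
          rw [this, abs_mul, abs_of_nonneg hq]
          nlinarith [abs_nonneg (t - x)]
        calc ‖F y - _‖ ≤ L * |y - x| ^ (β - 1) := by simpa [Real.norm_eq_abs] using h1
          _ ≤ L * |t - x| ^ (β - 1) := by
              apply mul_le_mul_of_nonneg_left _ hL
              exact Real.rpow_le_rpow (abs_nonneg _) h2 (by
                have h0 : (0:ℝ) ≤ (n:ℝ) := Nat.cast_nonneg n
                push_cast at hβ; linarith)
      have := Convex.norm_image_sub_le_of_norm_hasDerivWithin_le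
        (f := g) (s := segment ℝ x t)
        (fun y hy => ((hgd y (hseg hy)).hasDerivWithinAt))
        hbound (convex_segment x t) (left_mem_segment ℝ x t) (right_mem_segment ℝ x t)
      rw [hgx, sub_zero, Real.norm_eq_abs, Real.norm_eq_abs] at this
      calc |g t| ≤ L * |t - x| ^ (β - 1) * |t - x| := this
        _ = L * |t - x| ^ β := by
            have hne : |t - x| ≠ 0 := abs_ne_zero.2 (sub_ne_zero.2 htx)
            rw [mul_assoc, ← Real.rpow_add_one hne]
            norm_num


/-- Kernel bias bound: let `K` be a compactly supported kernel with `∫K = 1` and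
vanishing moments of orders `1,…,n₀`, and let `f` be `β`-Hölder (with `n < β ≤ n+1`,
`n = ⌊β⌋`, `β ≤ n₀`) on an interval `D = [d₁,d₂]` with Hölder constant `L`.  Then there
is `C > 0` depending only on `K` and `β` such that for every `x` interior to `D` and
`h` small enough, `|∫ K_h(x-y) f(y) dy - f(x)| ≤ C L h^β`. -/
theorem stmt_17 (K : ℝ → ℝ) (hKmeas : Measurable K) (hKint : Integrable K)
    (hKsupp : HasCompactSupport K)
    (hK0 : ∫ u, K u = 1)
    (n₀ : ℕ) (hn₀ : 1 ≤ n₀)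
    (hKmom : ∀ k : ℕ, 1 ≤ k → k ≤ n₀ → ∫ u, u ^ k * K u = 0)
    (β : ℝ) (hβpos : 0 < β) (hβn₀ : β ≤ n₀)
    (n : ℕ) (hn : (n : ℝ) < β) (hn' : β ≤ n + 1) :
    ∃ C : ℝ, 0 < C ∧
      ∀ (d₁ d₂ : ℝ) (f : ℝ → ℝ) (L : ℝ) (x : ℝ),
        0 ≤ L →
        ContDiffOn ℝ n f (Icc d₁ d₂) →
        (∀ y ∈ Icc d₁ d₂, ∀ z ∈ Icc d₁ d₂,
          |iteratedDeriv n f z - iteratedDeriv n f y| ≤ L * |z - y| ^ (β - n)) →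
        x ∈ Ioo d₁ d₂ →
        ∃ h₀ : ℝ, 0 < h₀ ∧ ∀ h : ℝ, 0 < h → h < h₀ →
          |(∫ y in Icc d₁ d₂, h⁻¹ * K (h⁻¹ * (x - y)) * f y) - f x|
            ≤ C * L * h ^ β := by
  -- support radius
  obtain ⟨r, hr⟩ := hKsupp.isBounded.subset_closedBall 0
  set M : ℝ := max r 1 with hM
  have hM1 : (1:ℝ) ≤ M := le_max_right r 1
  have hMpos : (0:ℝ) < M := lt_of_lt_of_le one_pos hM1
  have hKzero : ∀ u : ℝ, M < |u| → K u = 0 := by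
    intro u hu
    apply image_eq_zero_of_notMem_tsupport
    intro hmem
    have := hr hmem
    rw [Metric.mem_closedBall, Real.dist_eq, sub_zero] at this
    exact absurd (this.trans (le_max_left r 1)) (not_le.2 hu)
  -- the constant
  have hInonneg : 0 ≤ ∫ u, |u| ^ β * |K u| :=
    integral_nonneg fun u => by positivity
  refine ⟨1 + ∫ u, |u| ^ β * |K u|, by linarith, ?_⟩
  -- integrability facts
  have habsβ : Continuous fun u : ℝ => |u| ^ β :=
    continuous_abs.rpow_const fun u => Or.inr hβpos.le
  have hI1 : Integrable (fun u : ℝ => |u| ^ β * |K u|) := by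
    apply Integrable.mono (hKint.norm.const_mul (M ^ β))
      ((habsβ.measurable.mul hKmeas.abs).aestronglyMeasurable)
    filter_upwards with u
    by_cases hKu : K u = 0
    · simp [hKu]
    · have hu : |u| ≤ M := le_of_not_gt fun hc => hKu (hKzero u hc)
      have h1 : |u| ^ β ≤ M ^ β := Real.rpow_le_rpow (abs_nonneg u) hu hβpos.le
      simp only [Pi.mul_apply]
      rw [Real.norm_eq_abs, Real.norm_eq_abs, abs_mul, abs_abs, abs_mul,
        abs_of_nonneg (Real.rpow_nonneg (abs_nonneg u) β), abs_of_nonneg (by positivity : (0:ℝ) ≤ M ^ β)]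
      rw [abs_of_nonneg (norm_nonneg (K u)), Real.norm_eq_abs]
      exact mul_le_mul_of_nonneg_right h1 (abs_nonneg _)
  have hIk : ∀ k : ℕ, Integrable (fun u : ℝ => u ^ k * K u) := by
    intro k
    apply Integrable.mono (hKint.norm.const_mul (M ^ k))
      (((measurable_id.pow_const k).mul hKmeas).aestronglyMeasurable)
    filter_upwards with u
    by_cases hKu : K u = 0
    · simp [hKu]
    · have hu : |u| ≤ M := le_of_not_gt fun hc => hKu (hKzero u hc)
      have h1 : |u ^ k| ≤ M ^ k := by
        rw [abs_pow]; exact pow_le_pow_left₀ (abs_nonneg u) hu k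
      simp only [Pi.mul_apply, id]
      rw [Real.norm_eq_abs, Real.norm_eq_abs, abs_mul, abs_mul,
        abs_of_nonneg (by positivity : (0:ℝ) ≤ M ^ k), abs_of_nonneg (norm_nonneg (K u)),
        Real.norm_eq_abs]
      exact mul_le_mul_of_nonneg_right h1 (abs_nonneg _)
  -- main part
  intro d₁ d₂ f L x hL hf hHol hx
  have hd12 : d₁ < d₂ := hx.1.trans hx.2
  set proj : ℝ → ℝ := fun y => max d₁ (min d₂ y) with hprojdef
  have hproj_mem : ∀ y, proj y ∈ Icc d₁ d₂ := by
    intro y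
    constructor
    · exact le_max_left _ _
    · exact max_le hd12.le (min_le_left _ _)
  have hproj_id : ∀ y ∈ Icc d₁ d₂, proj y = y := by
    intro y hy
    simp only [hprojdef]
    rw [min_eq_right hy.2, max_eq_right hy.1]
  set g : ℝ → ℝ := fun y => f (proj y) with hgdef
  have hgcont : Continuous g :=
    hf.continuousOn.comp_continuous
      (continuous_const.max (continuous_const.min continuous_id)) hproj_mem
  have hgeq : ∀ y ∈ Icc d₁ d₂, g y = f y := fun y hy => by
    simp only [hgdef]; rw [hproj_id y hy]
  obtain ⟨B, hB⟩ := isCompact_Icc.exists_bound_of_continuousOn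
    (s := Icc d₁ d₂) hf.continuousOn
  have hBg : ∀ y, |g y| ≤ B := fun y => hB _ (hproj_mem y)
  have hB0 : 0 ≤ B := le_trans (abs_nonneg _) (hBg 0)
  -- choice of h₀
  refine ⟨min ((x - d₁)/M) ((d₂ - x)/M),
    lt_min (div_pos (by linarith [hx.1]) hMpos) (div_pos (by linarith [hx.2]) hMpos), ?_⟩
  intro h hh hh'
  have hhA : h * M < x - d₁ := by
    have := (lt_min_iff.1 hh').1
    calc h * M < ((x - d₁)/M) * M := by
          exact mul_lt_mul_of_pos_right this hMpos
      _ = x - d₁ := by field_simp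
  have hhB : h * M < d₂ - x := by
    have := (lt_min_iff.1 hh').2
    calc h * M < ((d₂ - x)/M) * M := by
          exact mul_lt_mul_of_pos_right this hMpos
      _ = d₂ - x := by field_simp
  have hmem : ∀ u : ℝ, |u| ≤ M → x - h * u ∈ Ioo d₁ d₂ := by
    intro u hu
    have h1 : h * u ≤ h * M := mul_le_mul_of_nonneg_left ((le_abs_self u).trans hu) hh.le
    have h2 : -(h * M) ≤ h * u := by
      have : -u ≤ M := (neg_le_abs u).trans hu
      nlinarith
    exact ⟨by linarith, by linarith⟩
  have hK0' : ∀ y : ℝ, y ∉ Ioo d₁ d₂ → K (h⁻¹ * (x - y)) = 0 := by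
    intro y hy
    apply hKzero
    have habs : h * M < |x - y| := by
      rw [mem_Ioo, not_and_or, not_lt, not_lt] at hy
      rcases hy with hy | hy
      · exact lt_of_lt_of_le (by linarith) (le_abs_self _)
      · exact lt_of_lt_of_le (by linarith) (neg_le_abs _)
    rw [abs_mul, abs_of_pos (inv_pos.2 hh)]
    rw [lt_inv_mul_iff₀ hh]
    linarith
  -- the extension g agrees with f where it matters; rewrite the integral
  have e1 : (∫ y in Icc d₁ d₂, h⁻¹ * K (h⁻¹ * (x - y)) * f y)
      = ∫ y, h⁻¹ * K (h⁻¹ * (x - y)) * g y := by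
    have heqon : EqOn (fun y => h⁻¹ * K (h⁻¹ * (x - y)) * f y)
        (fun y => h⁻¹ * K (h⁻¹ * (x - y)) * g y) (Icc d₁ d₂) := by
      intro y hy
      simp only [hgeq y hy]
    rw [setIntegral_congr_fun measurableSet_Icc heqon]
    apply setIntegral_eq_integral_of_forall_compl_eq_zero
    intro y hy
    have : y ∉ Ioo d₁ d₂ := fun hc => hy (Ioo_subset_Icc_self hc)
    rw [hK0' y this]
    ring
  have e2 : (∫ y, h⁻¹ * K (h⁻¹ * (x - y)) * g y) = ∫ u, K u * g (x - h * u) := by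
    have A : (∫ y, h⁻¹ * K (h⁻¹ * (x - y)) * g y)
        = ∫ t, h⁻¹ * K (h⁻¹ * t) * g (x - t) := by
      rw [← integral_sub_left_eq_self (fun t => h⁻¹ * K (h⁻¹ * t) * g (x - t)) volume x]
      simp
    have B1 := MeasureTheory.Measure.integral_comp_mul_left
      (fun t => h⁻¹ * K (h⁻¹ * t) * g (x - t)) h
    have B2 : ∀ u : ℝ, h⁻¹ * K (h⁻¹ * (h * u)) * g (x - h * u)
        = h⁻¹ * (K u * g (x - h * u)) := by
      intro u
      rw [inv_mul_cancel_left₀ hh.ne']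
      ring
    simp only [B2] at B1
    rw [integral_const_mul, abs_of_pos (inv_pos.2 hh), smul_eq_mul] at B1
    have B3 := mul_left_cancel₀ (inv_ne_zero hh.ne') B1
    rw [A, ← B3]
  -- Taylor coefficients
  set c : ℕ → ℝ := fun k => iteratedDeriv k f x / (k.factorial : ℝ) with hcdef
  have hnn₀ : n < n₀ := by
    have : (n : ℝ) < (n₀ : ℝ) := lt_of_lt_of_le hn hβn₀
    exact_mod_cast this
  have hint_g : Integrable (fun u => K u * g (x - h * u)) := by
    apply Integrable.mono (hKint.norm.const_mul B)
    · exact (hKmeas.mul ((hgcont.comp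
        (continuous_const.sub (continuous_const.mul continuous_id))).measurable)).aestronglyMeasurable
    filter_upwards with u
    rw [Real.norm_eq_abs, Real.norm_eq_abs, abs_mul, abs_mul, abs_of_nonneg hB0,
      abs_of_nonneg (norm_nonneg _), Real.norm_eq_abs, mul_comm B (|K u|)]
    exact mul_le_mul_of_nonneg_left (hBg _) (abs_nonneg _)
  have hsplit : ∀ u : ℝ, K u * (∑ k ∈ Finset.range (n+1), c k * ((x - h * u) - x)^k)
      = ∑ k ∈ Finset.range (n+1), (c k * (-h)^k) * (u^k * K u) := by
    intro u
    rw [Finset.mul_sum]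
    apply Finset.sum_congr rfl
    intro k _
    have : (x - h * u) - x = (-h) * u := by ring
    rw [this, mul_pow]
    ring
  have hint_P : Integrable (fun u => K u * (∑ k ∈ Finset.range (n+1), c k * ((x - h * u) - x)^k)) := by
    simp only [hsplit]
    exact integrable_finset_sum _ (fun k _ => (hIk k).const_mul _)
  have hP : (∫ u, K u * (∑ k ∈ Finset.range (n+1), c k * ((x - h * u) - x)^k)) = f x := by
    simp only [hsplit]
    rw [integral_finset_sum _ (fun k _ => (hIk k).const_mul _)]
    rw [Finset.sum_eq_single 0]
    · rw [integral_const_mul]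
      have h00 : (∫ u : ℝ, u ^ 0 * K u) = 1 := by
        simp only [pow_zero, one_mul]; exact hK0
      rw [h00, mul_one, pow_zero, mul_one]
      simp [hcdef, iteratedDeriv_zero]
    · intro b hb hb0
      rw [integral_const_mul, hKmom b (Nat.one_le_iff_ne_zero.2 hb0)
        (le_trans (Nat.lt_succ_iff.1 (Finset.mem_range.1 hb)) hnn₀.le), mul_zero]
    · intro hc
      exact absurd (Finset.mem_range.2 (Nat.succ_pos n)) hc
  have e3 : (∫ u, K u * g (x - h * u)) - f x
      = ∫ u, K u * (g (x - h * u) - ∑ k ∈ Finset.range (n+1), c k * ((x - h * u) - x)^k) := by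
    rw [← hP, ← integral_sub hint_g hint_P]
    congr 1
    ext u
    ring
  -- Taylor bound
  have htb := my_taylor_bound n β L f hn hn' hL (Ioo d₁ d₂) isOpen_Ioo (convex_Ioo d₁ d₂)
    (hf.mono Ioo_subset_Icc_self)
    (fun y hy z hz => hHol y (Ioo_subset_Icc_self hy) z (Ioo_subset_Icc_self hz)) x hx
  have hpt : ∀ u : ℝ, ‖K u * (g (x - h * u) - ∑ k ∈ Finset.range (n+1), c k * ((x - h * u) - x)^k)‖
      ≤ L * h ^ β * (|u| ^ β * |K u|) := by
    intro u
    rw [Real.norm_eq_abs, abs_mul]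
    by_cases hKu : K u = 0
    · simp only [hKu, abs_zero, zero_mul, mul_zero]
      positivity
    · have hu : |u| ≤ M := le_of_not_gt fun hc => hKu (hKzero u hc)
      have hmem' := hmem u hu
      have hgf : g (x - h * u) = f (x - h * u) := hgeq _ (Ioo_subset_Icc_self hmem')
      have hT := htb (x - h * u) hmem'
      have habs2 : |(x - h * u) - x| = h * |u| := by
        rw [show (x - h * u) - x = -(h * u) by ring, abs_neg, abs_mul, abs_of_pos hh]
      rw [habs2] at hT
      calc |K u| * |g (x - h * u) - ∑ k ∈ Finset.range (n+1), c k * ((x - h * u) - x)^k|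
          ≤ |K u| * (L * (h * |u|) ^ β) := by
            apply mul_le_mul_of_nonneg_left _ (abs_nonneg _)
            rw [hgf]
            exact hT
        _ = L * h ^ β * (|u| ^ β * |K u|) := by
            rw [Real.mul_rpow hh.le (abs_nonneg u)]
            ring
  have hmain := norm_integral_le_of_norm_le (μ := volume) (hI1.const_mul (L * h ^ β))
    (Filter.Eventually.of_forall hpt)
  rw [integral_const_mul] at hmain
  have hfinal : |(∫ u, K u * (g (x - h * u) - ∑ k ∈ Finset.range (n+1), c k * ((x - h * u) - x)^k))|
      ≤ (1 + ∫ u, |u| ^ β * |K u|) * L * h ^ β := by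
    rw [← Real.norm_eq_abs]
    apply hmain.trans
    have h1 : (∫ u, |u| ^ β * |K u|) ≤ 1 + ∫ u, |u| ^ β * |K u| := by linarith
    calc L * h ^ β * ∫ u, |u| ^ β * |K u|
        ≤ L * h ^ β * (1 + ∫ u, |u| ^ β * |K u|) := by
          apply mul_le_mul_of_nonneg_left h1
          positivity
      _ = (1 + ∫ u, |u| ^ β * |K u|) * L * h ^ β := by ring
  rw [e1, e2, e3]
  exact hfinal
end
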